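/- arXiv:2202.11298 — 2 statements merged into one kernel-verified Lean document; each statement's English description precedes it below -/
import Mathlib

section
/- Let 1 < p ≤ q ≤ ∞. Suppose the delay system ẋ(t) = f(x_t) is forward complete on C⁰ and there exists σ ∈ KL such that ‖φ(t,x₀)‖_{W^{1,p}} ≤ σ(‖x₀‖_{W^{1,p}}, t) for all t ≥ 0 and all x₀ ∈ W^{1,p}. Then there exists ω ∈ KL such that ‖φ(t,x₀)‖_{W^{1,q}} ≤ ω(‖x₀‖_{W^{1,q}}, t) for all t ≥ 0 and all x₀ ∈ W^{1,q}. -/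
open Set MeasureTheory Filter Topology
open scoped ENNReal NNReal

noncomputable section

abbrev Vec (n : ℕ) := EuclideanSpace ℝ (Fin n)

variable {n : ℕ}

/-- The segment `x_t` of a history `x : ℝ → ℝⁿ`, i.e. `x_t(s) = x(t+s)`
(only its values on `[-r,0]` are relevant). -/
def seg (r : ℝ) (x : ℝ → Vec n) (t : ℝ) : ℝ → Vec n := fun s => x (t + s)

/-- Sup norm over `[-r,0]`. -/
def supN (r : ℝ) (g : ℝ → Vec n) : ℝ := sSup ((fun s => ‖g s‖) '' Icc (-r) 0)

/-- Membership in `C⁰ = C([-r,0];ℝⁿ)`. -/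
def MemC0 (r : ℝ) (g : ℝ → Vec n) : Prop := ContinuousOn g (Icc (-r) 0)

/-- `f` vanishes at `0`, depends only on the values of its argument on `[-r,0]`,
and is Lipschitz on bounded subsets of `C⁰` with a nondecreasing (nonnegative)
modulus `L`. -/
def GoodRHS (r : ℝ) (f : (ℝ → Vec n) → Vec n) (L : ℝ → ℝ) : Prop :=
  f 0 = 0 ∧
  (∀ x y : ℝ → Vec n, EqOn x y (Icc (-r) 0) → f x = f y) ∧
  Monotone L ∧ (∀ s : ℝ, 0 ≤ L s) ∧
  ∀ R : ℝ, ∀ x y : ℝ → Vec n, MemC0 r x → MemC0 r y → supN r x ≤ R → supN r y ≤ R →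
    ‖f x - f y‖ ≤ L R * supN r (x - y)

/-- `x : ℝ → ℝⁿ` is a solution on `[-r, b)` (with `b ∈ (0,∞]` an extended
nonnegative real) of the delay system `ẋ(t) = f(x_t)` with initial condition `x0`:
it is continuous on `[-r,b)`, coincides with `x0` on `[-r,0]`, and satisfies the
integral equation `x(t) = x(0) + ∫₀ᵗ f(x_s) ds` on `[0,b)`. -/
def IsSol (r : ℝ) (f : (ℝ → Vec n) → Vec n) (x0 x : ℝ → Vec n) (b : ℝ≥0∞) : Prop :=
  ContinuousOn x {t : ℝ | -r ≤ t ∧ ENNReal.ofReal t < b} ∧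
  EqOn x x0 (Icc (-r) 0) ∧
  ∀ t : ℝ, 0 ≤ t → ENNReal.ofReal t < b → x t = x 0 + ∫ s in (0:ℝ)..t, f (seg r x s)

/-- Class `KL` functions `σ : [0,∞)×[0,∞) → [0,∞)`. -/
def ClassKL (σ : ℝ → ℝ → ℝ) : Prop :=
  (∀ s t : ℝ, 0 ≤ s → 0 ≤ t → 0 ≤ σ s t) ∧
  (∀ t : ℝ, 0 ≤ t →
    ContinuousOn (fun s => σ s t) (Ici 0) ∧ StrictMonoOn (fun s => σ s t) (Ici 0) ∧
      σ 0 t = 0) ∧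
  (∀ s : ℝ, 0 ≤ s →
    AntitoneOn (fun t => σ s t) (Ici 0) ∧ Tendsto (fun t => σ s t) atTop (nhds 0))

/-- Class `K∞` functions `a : [0,∞) → [0,∞)`. -/
def ClassKInf (a : ℝ → ℝ) : Prop :=
  (∀ s : ℝ, 0 ≤ s → 0 ≤ a s) ∧ ContinuousOn a (Ici 0) ∧ StrictMonoOn a (Ici 0) ∧
  a 0 = 0 ∧ Tendsto a atTop atTop

/-- The set of Hölder difference quotients `‖g t - g s‖ / |t-s|^α` over a set `S`. -/
def hRatios (α : ℝ) (S : Set ℝ) (g : ℝ → Vec n) : Set ℝ :=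
  {c | ∃ t ∈ S, ∃ s ∈ S, t ≠ s ∧ c = ‖g t - g s‖ / |t - s| ^ α}

/-- Membership in the Hölder space `C^{0,α}([-r,0])`. -/
def MemHol (r α : ℝ) (g : ℝ → Vec n) : Prop :=
  MemC0 r g ∧ BddAbove (hRatios α (Icc (-r) 0) g)

/-- The Hölder norm `max(‖g‖_∞, [g]_α)`. -/
def holderNorm (r α : ℝ) (g : ℝ → Vec n) : ℝ :=
  max (supN r g) (sSup (hRatios α (Icc (-r) 0) g))

/-- Membership in the Sobolev space `W^{1,p}([-r,0])`: `g` is absolutely continuous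
on `[-r,0]` (i.e. the integral of an integrable function `d`, which is then its a.e.
derivative) with `d ∈ L^p((-r,0))`. -/
def MemW (r : ℝ) (p : ℝ≥0∞) (g : ℝ → Vec n) : Prop :=
  ∃ d : ℝ → Vec n, IntegrableOn d (Icc (-r) 0) ∧
    eLpNorm d p (volume.restrict (Ioo (-r) 0)) < ⊤ ∧
    ∀ t ∈ Icc (-r) 0, g t = g (-r) + ∫ s in (-r)..t, d s

/-- The Sobolev norm `‖g‖_∞ + ‖ġ‖_p`; for an absolutely continuous `g` the a.e.
derivative coincides a.e. on `(-r,0)` with `deriv g`. -/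
def sobNorm (r : ℝ) (p : ℝ≥0∞) (g : ℝ → Vec n) : ℝ :=
  supN r g + (eLpNorm (deriv g) p (volume.restrict (Ioo (-r) 0))).toReal

/-- The Hölder exponent `1 - 1/p`, with the convention `1/∞ = 0`. -/
def hexp (p : ℝ≥0∞) : ℝ := 1 - (p.toReal)⁻¹

/-! ### Auxiliary lemmas -/

lemma supN_nonneg (r : ℝ) (g : ℝ → Vec n) : 0 ≤ supN r g :=
  Real.sSup_nonneg (by rintro y ⟨s, -, rfl⟩; exact norm_nonneg _)

lemma supN_le {r : ℝ} (hr : 0 < r) {g : ℝ → Vec n} {M : ℝ}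
    (h : ∀ s ∈ Icc (-r) 0, ‖g s‖ ≤ M) : supN r g ≤ M := by
  apply csSup_le ((Set.nonempty_Icc.2 (by linarith)).image _)
  rintro y ⟨s, hs, rfl⟩; exact h s hs

lemma supN_zero {r : ℝ} (hr : 0 < r) : supN r (0 : ℝ → Vec n) = 0 :=
  le_antisymm (supN_le hr (by simp)) (supN_nonneg _ _)

lemma memC0_seg {r : ℝ} (hr : 0 < r) {x : ℝ → Vec n} (hx : ContinuousOn x (Ici (-r)))
    {τ : ℝ} (hτ : 0 ≤ τ) : MemC0 r (seg r x τ) := by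
  apply hx.comp (continuous_const.add continuous_id).continuousOn
  intro s hs
  simp only [mem_Icc] at hs
  simp only [mem_Ici, id_eq, Pi.add_apply]
  linarith [hs.1]

lemma cont_fseg {r : ℝ} (hr : 0 < r) {f : (ℝ → Vec n) → Vec n} {L : ℝ → ℝ}
    (hf : GoodRHS r f L) {x : ℝ → Vec n} (hx : ContinuousOn x (Ici (-r))) :
    ContinuousOn (fun τ => f (seg r x τ)) (Ici 0) := by
  intro τ hτ
  rw [mem_Ici] at hτ
  rw [Metric.continuousWithinAt_iff]
  intro ε hε
  set K := Icc (-r) (τ + 1) with hK_def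
  have hKsub : K ⊆ Ici (-r) := fun u hu => hu.1
  have hKc : IsCompact K := isCompact_Icc
  have hxK : ContinuousOn x K := hx.mono hKsub
  have hbdd : BddAbove ((fun s => ‖x s‖) '' K) := hKc.bddAbove_image hxK.norm
  set R := sSup ((fun s => ‖x s‖) '' K) with hR_def
  have hRb : ∀ u ∈ K, ‖x u‖ ≤ R := fun u hu => le_csSup hbdd (mem_image_of_mem _ hu)
  have hLR : 0 ≤ L R := hf.2.2.2.1 R
  obtain ⟨δ0, hδ0, hδ0'⟩ := Metric.uniformContinuousOn_iff.1
    (hKc.uniformContinuousOn_of_continuous hxK) (ε / (2 * (L R + 1))) (by positivity)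
  refine ⟨min δ0 1, by positivity, ?_⟩
  intro τ' hτ' hd
  rw [mem_Ici] at hτ'
  rw [dist_eq_norm] at hd ⊢
  have hd0 : |τ' - τ| < δ0 := lt_of_lt_of_le (by rwa [Real.norm_eq_abs] at hd) (min_le_left _ _)
  have hd1 : |τ' - τ| < 1 := lt_of_lt_of_le (by rwa [Real.norm_eq_abs] at hd) (min_le_right _ _)
  have hmemτ : ∀ s ∈ Icc (-r) 0, τ + s ∈ K := by
    intro s hs; constructor
    · linarith [hs.1]
    · linarith [hs.2]
  have hmemτ' : ∀ s ∈ Icc (-r) 0, τ' + s ∈ K := by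
    intro s hs
    have h1 : τ' ≤ τ + 1 := by
      have := abs_lt.1 hd1; linarith [this.1]
    constructor
    · linarith [hs.1]
    · linarith [hs.2]
  have hsupτ : supN r (seg r x τ) ≤ R := by
    apply supN_le hr; intro s hs
    exact hRb _ (hmemτ s hs)
  have hsupτ' : supN r (seg r x τ') ≤ R := by
    apply supN_le hr; intro s hs
    exact hRb _ (hmemτ' s hs)
  have hsupdiff : supN r (seg r x τ' - seg r x τ) ≤ ε / (2 * (L R + 1)) := by
    apply supN_le hr
    intro s hs
    have := hδ0' (τ' + s) (hmemτ' s hs) (τ + s) (hmemτ s hs)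
      (by rw [Real.dist_eq]; simpa using hd0)
    rw [dist_eq_norm] at this
    exact le_of_lt this
  calc ‖f (seg r x τ') - f (seg r x τ)‖
      ≤ L R * supN r (seg r x τ' - seg r x τ) :=
        hf.2.2.2.2 R _ _ (memC0_seg hr hx hτ') (memC0_seg hr hx hτ) hsupτ' hsupτ
    _ ≤ L R * (ε / (2 * (L R + 1))) := by
        apply mul_le_mul_of_nonneg_left hsupdiff hLR
    _ < ε := by
        rw [div_eq_inv_mul, ← mul_assoc]
        have h2 : L R * (2 * (L R + 1))⁻¹ < 1 := by
          rw [mul_inv_lt_iff₀ (by positivity), one_mul]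
          linarith
        nlinarith

def Ltil (L : ℝ → ℝ) : ℝ → ℝ := fun u => ∫ v in u..(u+1), L v

lemma Ltil_spec {L : ℝ → ℝ} (hL : Monotone L) :
    Continuous (Ltil L) ∧ Monotone (Ltil L) ∧ ∀ u, L u ≤ Ltil L u := by
  have hint : ∀ a b : ℝ, IntervalIntegrable L volume a b := fun a b => hL.intervalIntegrable
  refine ⟨?_, ?_, ?_⟩
  · have : Ltil L = fun u => (∫ v in (0:ℝ)..(u+1), L v) - ∫ v in (0:ℝ)..u, L v := by
      funext u
      rw [intervalIntegral.integral_interval_sub_left (hint 0 (u+1)) (hint 0 u)]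
      rfl
    rw [this]
    exact ((intervalIntegral.continuous_primitive hint 0).comp
      (continuous_id.add continuous_const)).sub (intervalIntegral.continuous_primitive hint 0)
  · intro a b hab
    have ha : (∫ v in a..(a+1), L v) = ∫ w in (0:ℝ)..1, L (a + w) := by
      rw [intervalIntegral.integral_comp_add_left (fun v => L v) a]; norm_num
    have hb : (∫ v in b..(b+1), L v) = ∫ w in (0:ℝ)..1, L (b + w) := by
      rw [intervalIntegral.integral_comp_add_left (fun v => L v) b]; norm_num
    show (∫ v in a..(a+1), L v) ≤ ∫ v in b..(b+1), L v
    rw [ha, hb]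
    apply intervalIntegral.integral_mono_on (by norm_num)
    · exact (hL.comp (fun u v huv => by simpa using huv : Monotone (a + ·))).intervalIntegrable
    · exact (hL.comp (fun u v huv => by simpa using huv : Monotone (b + ·))).intervalIntegrable
    · intro w _; exact hL (by linarith)
  · intro u
    have : L u = ∫ _ in u..(u+1), L u := by simp
    rw [this]
    apply intervalIntegral.integral_mono_on (by linarith) intervalIntegrable_const (hint u (u+1))
    intro w hw; exact hL hw.1

/-- Lebesgue differentiation: a primitive of an integrable function has
a.e. derivative equal to the function. -/
lemma ae_deriv_eq {r : ℝ} (hr : 0 < r) {d : ℝ → Vec n} (hd : IntegrableOn d (Icc (-r) 0))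
    {g : ℝ → Vec n} (hg : ∀ t ∈ Icc (-r) 0, g t = g (-r) + ∫ s in (-r:ℝ)..t, d s) :
    ∀ᵐ t ∂(volume.restrict (Ioo (-r) 0)), deriv g t = d t := by
  set f : ℝ → Vec n := (Ioo (-r) 0).indicator d with hf_def
  have hf : Integrable f volume := by
    rw [hf_def, integrable_indicator_iff measurableSet_Ioo]
    exact hd.mono_set Ioo_subset_Icc_self
  set v := IsUnifLocDoublingMeasure.vitaliFamily (volume : Measure ℝ) 1 with hv
  have key := v.ae_tendsto_average (μ := volume) hf.locallyIntegrable
  rw [ae_restrict_iff' measurableSet_Ioo]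
  filter_upwards [key] with x hx hxI
  set F : ℝ → Vec n := fun u => ∫ s in (-r:ℝ)..u, f s with hF_def
  have hFsub : ∀ a b : ℝ, F b - F a = ∫ s in a..b, f s := fun a b =>
    intervalIntegral.integral_interval_sub_left hf.intervalIntegrable hf.intervalIntegrable
  have hslope_right : Tendsto (slope F x) (𝓝[>] x) (𝓝 (f x)) := by
    apply Tendsto.congr' _ (hx.comp (Real.tendsto_Icc_vitaliFamily_right x))
    filter_upwards [self_mem_nhdsWithin]
    rintro y (hy : x < y)
    have hvol : (volume (Icc x y)).toReal = y - x := by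
      rw [Real.volume_Icc, ENNReal.toReal_ofReal (by linarith)]
    simp only [Function.comp_apply, setAverage_eq, measureReal_def, hvol, slope_def_module]
    rw [hFsub x y, intervalIntegral.integral_of_le hy.le, ← integral_Icc_eq_integral_Ioc]
  have hslope_left : Tendsto (slope F x) (𝓝[<] x) (𝓝 (f x)) := by
    apply Tendsto.congr' _ (hx.comp (Real.tendsto_Icc_vitaliFamily_left x))
    filter_upwards [self_mem_nhdsWithin]
    rintro y (hy : y < x)
    have hvol : (volume (Icc y x)).toReal = x - y := by
      rw [Real.volume_Icc, ENNReal.toReal_ofReal (by linarith)]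
    simp only [Function.comp_apply, setAverage_eq, measureReal_def, hvol, slope_def_module]
    rw [show F y - F x = -(F x - F y) from (neg_sub (F x) (F y)).symm, hFsub y x,
      intervalIntegral.integral_of_le hy.le, ← integral_Icc_eq_integral_Ioc,
      smul_neg, ← neg_smul, neg_inv, neg_sub]
  have hF : HasDerivAt F (f x) x := by
    rw [hasDerivAt_iff_tendsto_slope, ← nhdsLT_sup_nhdsGT x, tendsto_sup]
    exact ⟨hslope_left, hslope_right⟩
  have hgF : g =ᶠ[𝓝 x] fun u => g (-r) + F u := by
    filter_upwards [isOpen_Ioo.mem_nhds hxI] with u hu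
    have hu' : u ∈ Icc (-r) 0 := Ioo_subset_Icc_self hu
    rw [hg u hu']
    congr 1
    rw [hF_def]
    simp only
    rw [intervalIntegral.integral_of_le hu'.1, intervalIntegral.integral_of_le hu'.1]
    apply setIntegral_congr_fun measurableSet_Ioc
    intro s hs
    have : s ∈ Ioo (-r) 0 := ⟨hs.1, lt_of_le_of_lt hs.2 hu.2⟩
    rw [hf_def, indicator_of_mem this]
  have hgd : HasDerivAt g (f x) x :=
    (hF.const_add (g (-r))).congr_of_eventuallyEq hgF
  rw [hgd.deriv, hf_def, indicator_of_mem hxI]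

lemma classKL_omega (σ : ℝ → ℝ → ℝ) (hσ : ClassKL σ) (C Mq r : ℝ) (hC : 1 ≤ C)
    (hMq : 0 ≤ Mq) (hr : 0 < r) (G : ℝ → ℝ) (hGc : Continuous G) (hGm : Monotone G)
    (hG0 : ∀ u, 0 ≤ u → 0 ≤ G u) :
    ClassKL (fun s t => σ (C*s) t + Mq * G (σ (C*s) 0) * σ (C*s) (max (t-r) 0)
      + s * max (2 - t/r) 0) := by
  obtain ⟨hσ0, hσs, hσt⟩ := hσ
  have hC0 : 0 < C := lt_of_lt_of_le one_pos hC
  have hCs : ∀ s : ℝ, 0 ≤ s → 0 ≤ C * s := fun s hs => mul_nonneg hC0.le hs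
  have hGσ : ∀ s : ℝ, 0 ≤ s → 0 ≤ Mq * G (σ (C*s) 0) :=
    fun s hs => mul_nonneg hMq (hG0 _ (hσ0 _ 0 (hCs s hs) le_rfl))
  have hmax0 : ∀ t : ℝ, (0:ℝ) ≤ max (t - r) 0 := fun t => le_max_right _ _
  have hcut0 : ∀ t : ℝ, (0:ℝ) ≤ max (2 - t/r) 0 := fun t => le_max_right _ _
  refine ⟨?_, ?_, ?_⟩
  · intro s t hs ht
    have h1 := hσ0 _ t (hCs s hs) ht
    have h2 := hσ0 _ _ (hCs s hs) (hmax0 t)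
    have h3 := hGσ s hs
    have h4 : 0 ≤ s * max (2 - t/r) 0 := mul_nonneg hs (hcut0 t)
    nlinarith
  · intro t ht
    have hmt : (0:ℝ) ≤ max (t - r) 0 := hmax0 t
    obtain ⟨hc_t, hm_t, hz_t⟩ := hσs t ht
    obtain ⟨hc_0, hm_0, hz_0⟩ := hσs 0 le_rfl
    obtain ⟨hc_m, hm_m, hz_m⟩ := hσs _ hmt
    have hCmap : MapsTo (fun s : ℝ => C * s) (Ici 0) (Ici 0) :=
      fun s hs => hCs s hs
    have hCc : ContinuousOn (fun s : ℝ => C * s) (Ici 0) :=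
      (continuous_const.mul continuous_id).continuousOn
    refine ⟨?_, ?_, ?_⟩
    · apply ContinuousOn.add
      apply ContinuousOn.add
      · exact hc_t.comp hCc hCmap
      · exact (continuousOn_const.mul ((hGc.comp_continuousOn
          (hc_0.comp hCc hCmap)))).mul (hc_m.comp hCc hCmap)
      · exact (continuousOn_id.mul continuousOn_const)
    · intro s1 hs1 s2 hs2 h12
      have hC1 : C * s1 ∈ Ici (0:ℝ) := hCs s1 hs1
      have hC2 : C * s2 ∈ Ici (0:ℝ) := hCs s2 hs2
      have hCC : C * s1 < C * s2 := by
        apply mul_lt_mul_of_pos_left h12 hC0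
      have ht1 : σ (C*s1) t < σ (C*s2) t := hm_t hC1 hC2 hCC
      have ht2 : Mq * G (σ (C*s1) 0) * σ (C*s1) (max (t-r) 0)
          ≤ Mq * G (σ (C*s2) 0) * σ (C*s2) (max (t-r) 0) := by
        apply mul_le_mul
        · exact mul_le_mul_of_nonneg_left (hGm (le_of_lt (hm_0 hC1 hC2 hCC))) hMq
        · exact hm_m.monotoneOn hC1 hC2 hCC.le
        · exact hσ0 _ _ hC1 hmt
        · exact hGσ s2 hs2
      have ht3 : s1 * max (2 - t/r) 0 ≤ s2 * max (2 - t/r) 0 :=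
        mul_le_mul_of_nonneg_right h12.le (hcut0 t)
      have := add_lt_add_of_lt_of_le (add_lt_add_of_lt_of_le ht1 ht2) ht3
      simpa using this
    · simp only [mul_zero, hz_t, hz_m, zero_mul, mul_zero, add_zero, zero_add, zero_mul]
  · intro s hs
    have hCs' : C * s ∈ Ici (0:ℝ) := hCs s hs
    obtain ⟨hanti, htend⟩ := hσt _ hCs'
    constructor
    · intro t1 ht1 t2 ht2 h12
      have hm12 : max (t1 - r) 0 ≤ max (t2 - r) 0 :=
        max_le_max (by linarith) le_rfl
      have hterm1 : σ (C*s) t2 ≤ σ (C*s) t1 := hanti ht1 ht2 h12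
      have hterm2 : σ (C*s) (max (t2-r) 0) ≤ σ (C*s) (max (t1-r) 0) :=
        hanti (hmax0 t1) (hmax0 t2) hm12
      have hterm2' := mul_le_mul_of_nonneg_left hterm2 (hGσ s hs)
      have hcut : max (2 - t2/r) 0 ≤ max (2 - t1/r) 0 := by
        apply max_le_max _ le_rfl
        have : t1 / r ≤ t2 / r := by gcongr
        linarith
      have hterm3 : s * max (2 - t2/r) 0 ≤ s * max (2 - t1/r) 0 :=
        mul_le_mul_of_nonneg_left hcut hs
      exact add_le_add (add_le_add hterm1 hterm2') hterm3
    · have hmaxt : Tendsto (fun t : ℝ => max (t - r) 0) atTop atTop := by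
        apply tendsto_atTop_mono (fun t => le_max_left (t - r) 0)
        simpa [sub_eq_add_neg] using tendsto_atTop_add_const_right atTop (-r) tendsto_id
      have h2 : Tendsto (fun t => σ (C*s) (max (t-r) 0)) atTop (nhds 0) := htend.comp hmaxt
      have h2' : Tendsto (fun t => Mq * G (σ (C*s) 0) * σ (C*s) (max (t-r) 0)) atTop (nhds 0) := by
        have := h2.const_mul (Mq * G (σ (C*s) 0))
        simpa using this
      have h3 : Tendsto (fun t => s * max (2 - t/r) 0) atTop (nhds 0) := by
        have heq : (fun t : ℝ => s * max (2 - t/r) 0) =ᶠ[atTop] fun _ => (0:ℝ) := by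
          filter_upwards [eventually_ge_atTop (2*r)] with t ht
          have h2r : 2 - t/r ≤ 0 := by
            rw [sub_nonpos, le_div_iff₀ hr]; linarith
          rw [max_eq_right h2r, mul_zero]
        exact tendsto_const_nhds.congr' heq.symm
      have := (htend.add h2').add h3
      simpa using this

set_option maxHeartbeats 2000000 in
/-- UGAS in `W^{1,p}` implies UGAS in `W^{1,q}` for `1 < p ≤ q ≤ ∞`,
for a forward-complete system on `C⁰`. -/
theorem stmt5 (n : ℕ) (hn : 1 ≤ n) (r : ℝ) (hr : 0 < r)
    (f : (ℝ → Vec n) → Vec n) (L : ℝ → ℝ) (hf : GoodRHS r f L)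
    (p q : ℝ≥0∞) (hp : 1 < p) (hpq : p ≤ q)
    (hFC : ∀ x0 : ℝ → Vec n, MemC0 r x0 → ∃ x : ℝ → Vec n, IsSol r f x0 x ⊤)
    (σ : ℝ → ℝ → ℝ) (hσ : ClassKL σ)
    (hUG : ∀ x0 x : ℝ → Vec n, MemW r p x0 → IsSol r f x0 x ⊤ →
      ∀ t : ℝ, 0 ≤ t → sobNorm r p (seg r x t) ≤ σ (sobNorm r p x0) t) :
    ∃ ω : ℝ → ℝ → ℝ, ClassKL ω ∧ ∀ x0 x : ℝ → Vec n, MemW r q x0 → IsSol r f x0 x ⊤ →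
      ∀ t : ℝ, 0 ≤ t → sobNorm r q (seg r x t) ≤ ω (sobNorm r q x0) t := by
  obtain ⟨hGc, hGm, hGL⟩ := Ltil_spec hf.2.2.1
  have hL0 := hf.2.2.2.1
  have hG0 : ∀ u, 0 ≤ u → 0 ≤ Ltil L u := fun u _ => le_trans (hL0 u) (hGL u)
  have hq1 : (1:ℝ≥0∞) ≤ q := le_trans hp.le hpq
  set θ : ℝ := 1 / p.toReal - 1 / q.toReal with hθ_def
  have hθ0 : 0 ≤ θ := by
    rw [hθ_def]
    rcases eq_or_ne q ⊤ with hq | hq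
    · simp only [hq, ENNReal.toReal_top, div_zero, sub_zero]
      positivity
    · have hpt : p ≠ ⊤ := fun h => hq (top_le_iff.1 (h ▸ hpq))
      have hp0 : 0 < p.toReal := ENNReal.toReal_pos (by positivity) hpt
      have hle : p.toReal ≤ q.toReal := ENNReal.toReal_mono hq hpq
      have := one_div_le_one_div_of_le hp0 hle
      linarith
  set C : ℝ := max 1 (r ^ θ) with hC_def
  have hC1 : (1:ℝ) ≤ C := le_max_left _ _
  have hC0 : (0:ℝ) < C := lt_of_lt_of_le one_pos hC1
  set Mq : ℝ := r ^ (q.toReal⁻¹) with hMq_def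
  have hMq0 : (0:ℝ) ≤ Mq := Real.rpow_nonneg hr.le _
  refine ⟨fun s t => σ (C*s) t + Mq * Ltil L (σ (C*s) 0) * σ (C*s) (max (t-r) 0)
      + s * max (2 - t/r) 0,
    classKL_omega σ hσ C Mq r hC1 hMq0 hr _ hGc hGm hG0, ?_⟩
  intro x0 x hx0q hsol t ht
  have hxc : ContinuousOn x (Ici (-r)) := by
    have hset : {u : ℝ | -r ≤ u ∧ ENNReal.ofReal u < (⊤:ℝ≥0∞)} = Ici (-r) := by
      ext u; simp [ENNReal.ofReal_lt_top]
    have := hsol.1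
    rwa [hset] at this
  obtain ⟨d, hd_int, hd_q, hx0AC⟩ := hx0q
  set μI := volume.restrict (Ioo (-r) (0:ℝ)) with hμI_def
  have hdmeas : AEStronglyMeasurable d μI :=
    (hd_int.mono_set Ioo_subset_Icc_self).aestronglyMeasurable
  have hvolI : μI Set.univ = ENNReal.ofReal r := by
    rw [hμI_def, Measure.restrict_apply_univ, Real.volume_Ioo]
    norm_num
  have hrpow_fin : (ENNReal.ofReal r) ^ θ ≠ ⊤ :=
    (ENNReal.rpow_lt_top_of_nonneg hθ0 ENNReal.ofReal_ne_top).ne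
  have hdpq : eLpNorm d p μI ≤ eLpNorm d q μI * (ENNReal.ofReal r) ^ θ := by
    have := eLpNorm_le_eLpNorm_mul_rpow_measure_univ hpq hdmeas
    rwa [hvolI] at this
  have hdp : eLpNorm d p μI < ⊤ :=
    lt_of_le_of_lt hdpq (ENNReal.mul_lt_top hd_q (lt_top_iff_ne_top.2 hrpow_fin))
  have hx0p : MemW r p x0 := ⟨d, hd_int, hdp, hx0AC⟩
  have hx0deriv : ∀ᵐ s ∂μI, deriv x0 s = d s := ae_deriv_eq hr hd_int hx0AC
  have hEq_q : eLpNorm (deriv x0) q μI = eLpNorm d q μI :=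
    eLpNorm_congr_ae (by filter_upwards [hx0deriv] with s hs using hs)
  have hEq_p : eLpNorm (deriv x0) p μI = eLpNorm d p μI :=
    eLpNorm_congr_ae (by filter_upwards [hx0deriv] with s hs using hs)
  set s0p : ℝ := sobNorm r p x0 with hs0p_def
  set s0q : ℝ := sobNorm r q x0 with hs0q_def
  have hs0q0 : 0 ≤ s0q := add_nonneg (supN_nonneg _ _) ENNReal.toReal_nonneg
  have hs0p0 : 0 ≤ s0p := add_nonneg (supN_nonneg _ _) ENNReal.toReal_nonneg
  -- comparison of the two initial norms
  have hs0pq : s0p ≤ C * s0q := by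
    have h1 : (eLpNorm (deriv x0) p μI).toReal
        ≤ (eLpNorm (deriv x0) q μI).toReal * r ^ θ := by
      rw [hEq_p, hEq_q]
      have h2 := ENNReal.toReal_mono
        (ENNReal.mul_ne_top hd_q.ne hrpow_fin) hdpq
      rwa [ENNReal.toReal_mul, ← ENNReal.toReal_rpow, ENNReal.toReal_ofReal hr.le] at h2
    have hrθC : r ^ θ ≤ C := le_max_right _ _
    have hsup0 : 0 ≤ supN r x0 := supN_nonneg _ _
    have htq0 : 0 ≤ (eLpNorm (deriv x0) q μI).toReal := ENNReal.toReal_nonneg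
    rw [hs0p_def, hs0q_def]
    unfold sobNorm
    rw [← hμI_def]
    nlinarith [ENNReal.toReal_nonneg (a := eLpNorm (deriv x0) p μI)]
  have hCs0q : (0:ℝ) ≤ C * s0q := mul_nonneg hC0.le hs0q0
  -- the UGAS estimate in W^{1,p}
  have hP : ∀ τ : ℝ, 0 ≤ τ → sobNorm r p (seg r x τ) ≤ σ s0p τ := hUG x0 x hx0p hsol
  have hσmono : ∀ τ : ℝ, 0 ≤ τ → σ s0p τ ≤ σ (C*s0q) τ := fun τ hτ =>
    ((hσ.2.1 τ hτ).2.1.monotoneOn) hs0p0 hCs0q hs0pq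
  have hsup : ∀ τ : ℝ, 0 ≤ τ → supN r (seg r x τ) ≤ σ (C*s0q) τ := by
    intro τ hτ
    have h1 : supN r (seg r x τ) ≤ sobNorm r p (seg r x τ) :=
      le_add_of_nonneg_right ENNReal.toReal_nonneg
    exact le_trans h1 (le_trans (hP τ hτ) (hσmono τ hτ))
  set R : ℝ := σ (C*s0q) 0 with hR_def
  have hR0 : 0 ≤ R := hσ.1 _ 0 hCs0q le_rfl
  have hanti : AntitoneOn (fun u => σ (C*s0q) u) (Ici 0) := (hσ.2.2 _ hCs0q).1
  have hsupR : ∀ τ : ℝ, 0 ≤ τ → supN r (seg r x τ) ≤ R := fun τ hτ =>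
    le_trans (hsup τ hτ) (hanti (self_mem_Ici) hτ hτ)
  set g : ℝ → Vec n := fun τ => f (seg r x τ) with hg_def
  have hgc : ContinuousOn g (Ici 0) := cont_fseg hr hf hxc
  have hgb : ∀ τ : ℝ, 0 ≤ τ → ‖g τ‖ ≤ L R * σ (C*s0q) τ := by
    intro τ hτ
    have h := hf.2.2.2.2 R (seg r x τ) 0 (memC0_seg hr hxc hτ) continuousOn_const
      (hsupR τ hτ) (by rw [supN_zero hr]; exact hR0)
    rw [hf.1, sub_zero, sub_zero] at h
    exact le_trans h (mul_le_mul_of_nonneg_left (hsup τ hτ) (hL0 R))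
  -- x solves the ODE pointwise on (0,∞)
  have hxg : ∀ τ : ℝ, 0 < τ → HasDerivAt x (g τ) τ := by
    intro τ hτ
    have hIci : Ici (0:ℝ) ∈ 𝓝 τ := Ici_mem_nhds hτ
    have hint : IntervalIntegrable g volume 0 τ := by
      apply ContinuousOn.intervalIntegrable
      apply hgc.mono
      rw [uIcc_of_le hτ.le]
      exact fun u hu => hu.1
    have hmeasg : StronglyMeasurableAtFilter g (𝓝 τ) volume :=
      ContinuousOn.stronglyMeasurableAtFilter isOpen_Ioi (hgc.mono Ioi_subset_Ici_self) τ hτ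
    have hFder : HasDerivAt (fun u => ∫ v in (0:ℝ)..u, g v) (g τ) τ :=
      intervalIntegral.integral_hasDerivAt_right hint hmeasg (hgc.continuousAt hIci)
    have heq : x =ᶠ[𝓝 τ] fun u => x 0 + ∫ v in (0:ℝ)..u, g v := by
      filter_upwards [isOpen_Ioi.mem_nhds hτ] with u hu
      exact hsol.2.2 u (le_of_lt hu) (by simp)
    exact (hFder.const_add (x 0)).congr_of_eventuallyEq heq
  have hxd0 : ∀ τ ∈ Ioo (-r) (0:ℝ), deriv x τ = deriv x0 τ := by
    intro τ hτ
    apply Filter.EventuallyEq.deriv_eq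
    filter_upwards [isOpen_Ioo.mem_nhds hτ] with u hu
    exact hsol.2.1 (Ioo_subset_Icc_self hu)
  have hsegd : ∀ s : ℝ, deriv (seg r x t) s = deriv x (t + s) := by
    intro s
    exact deriv_comp_const_add x t s
  -- splitting of the segment
  set m : ℝ := min t r with hm_def
  have hm0 : 0 ≤ m := le_min ht hr.le
  have hmt : m ≤ t := min_le_left _ _
  have hmr : m ≤ r := min_le_right _ _
  have htm : t - m = max (t - r) 0 := by
    rcases le_total t r with h | h
    · rw [hm_def, min_eq_left h, sub_self, max_eq_right (by linarith)]
    · rw [hm_def, min_eq_right h, max_eq_left (by linarith)]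
  set A : Set ℝ := Ioo (-r) (-m) with hA_def
  set B : Set ℝ := Ioo (-m) (0:ℝ) with hB_def
  set u : ℝ → Vec n := A.indicator (fun s => deriv x0 (t+s)) with hu_def
  set w : ℝ → Vec n := B.indicator (fun s => g (t+s)) with hw_def
  have hae : (fun s => deriv (seg r x t) s) =ᵐ[μI] u + w := by
    have hmne : ∀ᵐ (s : ℝ), s ≠ -m := by
      rw [ae_iff]
      simpa using measure_singleton (-m)
    rw [hμI_def, Filter.EventuallyEq, ae_restrict_iff' measurableSet_Ioo]
    filter_upwards [hmne] with s hsne hsI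
    rcases lt_trichotomy s (-m) with hlt | heq | hgt
    · have hsA : s ∈ A := ⟨hsI.1, hlt⟩
      have hsnB : s ∉ B := fun h => absurd h.1 (not_lt.2 hlt.le)
      have htr' : t < r := by
        by_contra h
        push_neg at h
        rw [hm_def, min_eq_right h] at hlt
        exact absurd hsI.1 (not_lt.2 hlt.le)
      have hmt' : m = t := by rw [hm_def, min_eq_left htr'.le]
      have htsI : t + s ∈ Ioo (-r) (0:ℝ) := by
        constructor
        · have := hsI.1; linarith
        · have := hlt; rw [hmt'] at this; linarith
      rw [Pi.add_apply, hu_def, hw_def, indicator_of_mem hsA, indicator_of_notMem hsnB,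
        add_zero, hsegd s, hxd0 _ htsI]
    · exact absurd heq hsne
    · have hsB : s ∈ B := ⟨hgt, hsI.2⟩
      have hsnA : s ∉ A := fun h => absurd h.2 (not_lt.2 hgt.le)
      have hts0 : 0 < t + s := by
        have h1 : t - m ≥ 0 := by linarith
        linarith
      rw [Pi.add_apply, hu_def, hw_def, indicator_of_notMem hsnA, indicator_of_mem hsB,
        zero_add, hsegd s, (hxg _ hts0).deriv]
  have hBsub : B ⊆ Ioo (-r) (0:ℝ) := fun s hs => ⟨by have := hs.1; linarith, hs.2⟩
  have hu_meas : AEStronglyMeasurable u μI :=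
    (((stronglyMeasurable_deriv x0).comp_measurable
      (measurable_const_add t)).aestronglyMeasurable).indicator measurableSet_Ioo
  have hw_meas : AEStronglyMeasurable w μI := by
    rw [hw_def, aestronglyMeasurable_indicator_iff measurableSet_Ioo]
    have hres : μI.restrict B = volume.restrict B := by
      rw [hμI_def, Measure.restrict_restrict measurableSet_Ioo,
        inter_eq_self_of_subset_left hBsub]
    rw [hres]
    apply ContinuousOn.aestronglyMeasurable _ measurableSet_Ioo
    apply hgc.comp (continuous_const.add continuous_id).continuousOn
    intro s hs
    simp only [mem_Ici, id_eq, Pi.add_apply]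
    have h1 : -m < s := hs.1
    have : 0 ≤ t - m := by linarith
    linarith
  have hE : eLpNorm (fun s => deriv (seg r x t) s) q μI ≤ eLpNorm u q μI + eLpNorm w q μI := by
    rw [eLpNorm_congr_ae hae]
    exact eLpNorm_add_le hu_meas hw_meas hq1
  -- bound on the initial-data part
  have hSsub : Ioo (t-r) (t-m) ⊆ Ioo (-r) (0:ℝ) := by
    intro s hs
    rcases le_total t r with h | h
    · have hmt' : m = t := by rw [hm_def, min_eq_left h]
      constructor
      · have := hs.1; linarith
      · have := hs.2; rw [hmt'] at this; linarith
    · have hmt' : m = r := by rw [hm_def, min_eq_right h]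
      exfalso
      have h1 := hs.1
      have h2 := hs.2
      rw [hmt'] at h2
      linarith
  have hu_bound : eLpNorm u q μI ≤ eLpNorm (deriv x0) q μI := by
    have hdx0meas : AEStronglyMeasurable (deriv x0)
        (volume.restrict (Ioo (t-r) (t-m))) :=
      (stronglyMeasurable_deriv x0).aestronglyMeasurable
    have hpre : (fun s : ℝ => t + s) ⁻¹' (Ioo (t-r) (t-m)) = A := by
      rw [hA_def]
      ext s
      simp only [mem_preimage, mem_Ioo]
      constructor
      · rintro ⟨h1, h2⟩; exact ⟨by linarith, by linarith⟩
      · rintro ⟨h1, h2⟩; exact ⟨by linarith, by linarith⟩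
    have hmp : MeasurePreserving (fun s : ℝ => t + s)
        (volume.restrict A) (volume.restrict (Ioo (t-r) (t-m))) := by
      have := (measurePreserving_add_left (volume : Measure ℝ) t).restrict_preimage
        (s := Ioo (t-r) (t-m)) measurableSet_Ioo
      rwa [hpre] at this
    calc eLpNorm u q μI ≤ eLpNorm u q volume :=
          eLpNorm_mono_measure _ Measure.restrict_le_self
      _ = eLpNorm (fun s => deriv x0 (t+s)) q (volume.restrict A) := by
          rw [hu_def, eLpNorm_indicator_eq_eLpNorm_restrict measurableSet_Ioo]
      _ = eLpNorm ((deriv x0) ∘ (fun s : ℝ => t + s)) q (volume.restrict A) := rfl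
      _ = eLpNorm (deriv x0) q (volume.restrict (Ioo (t-r) (t-m))) :=
          eLpNorm_comp_measurePreserving hdx0meas hmp
      _ ≤ eLpNorm (deriv x0) q μI := by
          rw [hμI_def]
          exact eLpNorm_mono_measure _ (Measure.restrict_mono hSsub le_rfl)
  -- bound on the flow part
  have hw_bound : eLpNorm w q μI
      ≤ (ENNReal.ofReal r) ^ (q.toReal⁻¹) * ENNReal.ofReal (L R * σ (C*s0q) (t - m)) := by
    have htm0 : (0:ℝ) ≤ t - m := by linarith
    have hvb : ∀ s : ℝ, ‖w s‖ ≤ L R * σ (C*s0q) (t-m) := by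
      intro s
      by_cases hsB : s ∈ B
      · rw [hw_def, indicator_of_mem hsB]
        have h1 : 0 < t + s := by
          have := hsB.1; linarith
        refine le_trans (hgb (t+s) h1.le) ?_
        apply mul_le_mul_of_nonneg_left _ (hL0 R)
        apply hanti htm0 h1.le
        have := hsB.1; linarith
      · rw [hw_def, indicator_of_notMem hsB]
        simp only [norm_zero]
        exact mul_nonneg (hL0 R) (hσ.1 _ _ hCs0q htm0)
    have := eLpNorm_le_of_ae_bound (μ := μI) (p := q) (Eventually.of_forall hvb)
    rwa [hvolI] at this
  -- finiteness
  have hq_fin : eLpNorm (deriv x0) q μI < ⊤ := by rw [hEq_q]; exact hd_q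
  have hu_fin : eLpNorm u q μI < ⊤ := lt_of_le_of_lt hu_bound hq_fin
  have hw_fin : eLpNorm w q μI < ⊤ := by
    apply lt_of_le_of_lt hw_bound
    exact ENNReal.mul_lt_top
      (ENNReal.rpow_lt_top_of_nonneg (by positivity) ENNReal.ofReal_ne_top)
      ENNReal.ofReal_lt_top
  -- real-valued bounds
  have hDer : (eLpNorm (fun s => deriv (seg r x t) s) q μI).toReal
      ≤ (eLpNorm u q μI).toReal + (eLpNorm w q μI).toReal := by
    have h1 := ENNReal.toReal_mono (ENNReal.add_lt_top.2 ⟨hu_fin, hw_fin⟩).ne hE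
    rwa [ENNReal.toReal_add hu_fin.ne hw_fin.ne] at h1
  have hu_r : (eLpNorm u q μI).toReal ≤ (eLpNorm (deriv x0) q μI).toReal :=
    ENNReal.toReal_mono hq_fin.ne hu_bound
  have hu_r2 : (eLpNorm (deriv x0) q μI).toReal ≤ s0q := by
    rw [hs0q_def]
    unfold sobNorm
    rw [← hμI_def]
    exact le_add_of_nonneg_left (supN_nonneg _ _)
  have hw_r : (eLpNorm w q μI).toReal ≤ Mq * (L R * σ (C*s0q) (t-m)) := by
    have htm0 : (0:ℝ) ≤ t - m := by linarith
    have hfin : ((ENNReal.ofReal r) ^ (q.toReal⁻¹)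
        * ENNReal.ofReal (L R * σ (C*s0q) (t - m))) ≠ ⊤ :=
      (ENNReal.mul_lt_top
        (ENNReal.rpow_lt_top_of_nonneg (by positivity) ENNReal.ofReal_ne_top)
        ENNReal.ofReal_lt_top).ne
    have h1 := ENNReal.toReal_mono hfin hw_bound
    rwa [ENNReal.toReal_mul, ← ENNReal.toReal_rpow, ENNReal.toReal_ofReal hr.le,
      ENNReal.toReal_ofReal
        (mul_nonneg (hL0 R) (hσ.1 _ _ hCs0q htm0))] at h1
  -- bound the initial-data part by the cutoff term
  have hu_cut : (eLpNorm u q μI).toReal ≤ s0q * max (2 - t/r) 0 := by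
    rcases lt_or_ge t r with htr | htr
    · have hcut1 : (1:ℝ) ≤ max (2 - t/r) 0 := by
        apply le_max_of_le_left
        have : t / r < 1 := (div_lt_one hr).2 htr
        linarith
      calc (eLpNorm u q μI).toReal ≤ s0q := le_trans hu_r hu_r2
        _ ≤ s0q * max (2 - t/r) 0 := le_mul_of_one_le_right hs0q0 hcut1
    · have hmr' : m = r := by rw [hm_def, min_eq_right htr]
      have huzero : u = 0 := by
        rw [hu_def, hA_def, hmr']
        funext s
        rw [Ioo_self, indicator_empty]
        rfl
      rw [huzero, eLpNorm_zero, ENNReal.toReal_zero]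
      exact mul_nonneg hs0q0 (le_max_right _ _)
  -- final assembly
  have hLRG : L R ≤ Ltil L (σ (C*s0q) 0) := by
    rw [hR_def]
    exact hGL _
  have hσmax0 : 0 ≤ σ (C*s0q) (max (t-r) 0) := hσ.1 _ _ hCs0q (le_max_right _ _)
  have hfinal : (eLpNorm (fun s => deriv (seg r x t) s) q μI).toReal
      ≤ Mq * Ltil L (σ (C*s0q) 0) * σ (C*s0q) (max (t-r) 0) + s0q * max (2 - t/r) 0 := by
    have h1 : Mq * (L R * σ (C*s0q) (t-m))
        ≤ Mq * Ltil L (σ (C*s0q) 0) * σ (C*s0q) (max (t-r) 0) := by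
      rw [← htm, mul_assoc]
      apply mul_le_mul_of_nonneg_left _ hMq0
      apply mul_le_mul_of_nonneg_right hLRG
      rw [htm]
      exact hσmax0
    linarith [hw_r, hu_cut, hDer]
  show sobNorm r q (seg r x t) ≤ _
  unfold sobNorm
  rw [← hμI_def]
  have hsup_t : supN r (seg r x t) ≤ σ (C*s0q) t := hsup t ht
  have : (eLpNorm (deriv (seg r x t)) q μI).toReal
      = (eLpNorm (fun s => deriv (seg r x t) s) q μI).toReal := rfl
  rw [this]
  linarith [hfinal, hsup_t]
end
end

section
/- Let p ∈ (1,∞) and let x₀ ∈ W^{1,p}. If x is a solution of the delay system ẋ(t) = f(x_t) with initial condition x₀ on [0,b) for some 0 < b ≤ ∞, then x_t ∈ W^{1,p} for every t ∈ [0,b), and the map t ↦ x_t is continuous from [0,b) into (W^{1,p}, ‖·‖_{W^{1,p}}). -/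
open Set MeasureTheory Filter Topology
open scoped ENNReal NNReal

noncomputable section

variable {n : ℕ}

section Aux

open Metric intervalIntegral

variable {n : ℕ}

lemma ae_hasDerivAt_intervalIntegral (D : ℝ → Vec n) (hD : Integrable D volume) (a : ℝ) :
    ∀ᵐ u : ℝ, HasDerivAt (fun v => ∫ s in a..v, D s) (D u) u := by
  filter_upwards [IsUnifLocDoublingMeasure.ae_tendsto_average_norm_sub volume
    hD.locallyIntegrable 1] with u hu
  have hten : Tendsto (fun ρ : ℝ => ⨍ y in closedBall u ρ, ‖D y - D u‖) (𝓝[>] 0) (𝓝 0) := by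
    refine hu (fun _ => u) id tendsto_id ?_
    filter_upwards [self_mem_nhdsWithin] with ρ hρ
    exact mem_closedBall_self (by simpa using (le_of_lt (mem_Ioi.1 hρ)))
  rw [hasDerivAt_iff_isLittleO, Asymptotics.isLittleO_iff]
  intro c hc
  have hev : ∀ᶠ ρ in 𝓝[>] (0:ℝ), (⨍ y in closedBall u ρ, ‖D y - D u‖) < c / 2 :=
    hten.eventually (gt_mem_nhds (by positivity))
  rw [eventually_nhdsWithin_iff, Metric.eventually_nhds_iff] at hev
  obtain ⟨ρ₀, hρ₀, hsmall⟩ := hev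
  filter_upwards [Metric.ball_mem_nhds u hρ₀] with x' hx'
  rcases eq_or_ne x' u with rfl | hne
  · simp
  set ρ := |x' - u| with hρdef
  have hρpos : 0 < ρ := abs_pos.2 (sub_ne_zero.2 hne)
  have hρlt : ρ < ρ₀ := by simpa [Real.dist_eq] using hx'
  have havg : (⨍ y in closedBall u ρ, ‖D y - D u‖) < c / 2 := by
    refine hsmall (y := ρ) ?_ hρpos
    simpa [Real.dist_eq, abs_of_pos hρpos] using hρlt
  have hFF : (∫ s in a..x', D s) - (∫ s in a..u, D s) = ∫ s in u..x', D s :=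
    integral_interval_sub_left (hD.intervalIntegrable) (hD.intervalIntegrable)
  have hconst : (∫ s in u..x', (D s - D u)) = (∫ s in u..x', D s) - (x' - u) • D u := by
    rw [integral_sub (hD.intervalIntegrable) (intervalIntegrable_const)]
    simp
  have hIsub : IntegrableOn (fun y => ‖D y - D u‖) (closedBall u ρ) volume := by
    refine Integrable.norm ?_
    exact hD.integrableOn.sub (integrableOn_const (by
      rw [Real.volume_closedBall]; exact ENNReal.ofReal_ne_top))
  have hsub : Set.uIoc u x' ⊆ closedBall u ρ := by
    intro y hy
    have h1 : min u x' ≤ y := le_of_lt hy.1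
    have h2 : y ≤ max u x' := hy.2
    have hm : max u x' - min u x' = |x' - u| := by
      rcases le_total u x' with h | h
      · rw [max_eq_right h, min_eq_left h, abs_of_nonneg (by linarith)]
      · rw [max_eq_left h, min_eq_right h, abs_of_nonpos (by linarith)]; ring
    have hu1 : min u x' ≤ u := min_le_left _ _
    have hu2 : u ≤ max u x' := le_max_left _ _
    rw [mem_closedBall, Real.dist_eq, abs_sub_le_iff]
    constructor <;> linarith [hm]
  have key : ‖((∫ s in a..x', D s) - ∫ s in a..u, D s) - (x' - u) • D u‖
      ≤ ∫ y in closedBall u ρ, ‖D y - D u‖ := by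
    rw [hFF, ← hconst]
    refine le_trans (norm_integral_le_integral_norm_uIoc) ?_
    refine setIntegral_mono_set hIsub ?_ (Filter.Eventually.of_forall hsub)
    exact Filter.Eventually.of_forall fun y => norm_nonneg _
  have hvol : (volume (closedBall u ρ)).toReal = 2 * ρ := by
    rw [Real.volume_closedBall, ENNReal.toReal_ofReal (by linarith)]
  have havg' : (∫ y in closedBall u ρ, ‖D y - D u‖) ≤ 2 * ρ * (c/2) := by
    have h0 := setAverage_eq (μ := volume) (fun y => ‖D y - D u‖) (closedBall u ρ)
    rw [measureReal_def, hvol] at h0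
    have h2ρ : (0:ℝ) < 2 * ρ := by linarith
    have heq : (∫ y in closedBall u ρ, ‖D y - D u‖)
        = (2*ρ) * ⨍ y in closedBall u ρ, ‖D y - D u‖ := by
      rw [h0, smul_eq_mul]; field_simp
    rw [heq]
    exact mul_le_mul_of_nonneg_left havg.le (by linarith)
  calc ‖((∫ s in a..x', D s) - ∫ s in a..u, D s) - (x' - u) • D u‖
      ≤ 2 * ρ * (c/2) := key.trans havg'
    _ = c * ‖x' - u‖ := by rw [Real.norm_eq_abs, ← hρdef]; ring

lemma translate_Lp_cont (D : ℝ → Vec n) {p : ℝ≥0∞} (hp1 : 1 ≤ p) (hp' : p ≠ ⊤)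
    (hD : MemLp D p volume) {ε : ℝ} (hε : 0 < ε) :
    ∃ δ : ℝ, 0 < δ ∧ ∀ h : ℝ, |h| < δ →
      eLpNorm (fun u => D (h + u) - D u) p volume < ENNReal.ofReal ε := by
  obtain ⟨ψ, hψsupp, hψclose, hψcont, hψmem⟩ :=
    hD.exists_hasCompactSupport_eLpNorm_sub_le hp'
      (ε := ENNReal.ofReal (ε/4)) (by simp [ENNReal.ofReal_eq_zero]; positivity)
  obtain ⟨K, hK⟩ : ∃ K : ℝ, tsupport ψ ⊆ closedBall 0 K :=
    hψsupp.isBounded.subset_closedBall 0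
  have hψuc : UniformContinuous ψ := hψsupp.uniformContinuous_of_continuous hψcont
  set V : ℝ≥0∞ := (volume (Icc (-(K+1)) (K+1) : Set ℝ)) ^ p.toReal⁻¹ with hV
  have hVfin : V ≠ ⊤ :=
    (ENNReal.rpow_lt_top_of_nonneg (inv_nonneg.2 ENNReal.toReal_nonneg)
      measure_Icc_lt_top.ne).ne
  set η : ℝ := (ε/4) / (V.toReal + 1) with hηdef
  have hVnn : (0:ℝ) ≤ V.toReal := ENNReal.toReal_nonneg
  have hη : 0 < η := by positivity
  obtain ⟨δ', hδ', hψδ⟩ := Metric.uniformContinuous_iff.1 hψuc η hη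
  refine ⟨min δ' 1, by positivity, fun h hh => ?_⟩
  have hh1 : |h| < δ' := lt_of_lt_of_le hh (min_le_left _ _)
  have hh2 : |h| ≤ 1 := le_of_lt (lt_of_lt_of_le hh (min_le_right _ _))
  have mp : MeasurePreserving (fun u : ℝ => h + u) volume volume :=
    measurePreserving_add_left volume h
  have hDm : AEStronglyMeasurable D volume := hD.aestronglyMeasurable
  have hψm : AEStronglyMeasurable ψ volume := hψcont.aestronglyMeasurable
  have hDψm : AEStronglyMeasurable (D - ψ) volume := hDm.sub hψm
  have hA : eLpNorm (fun u => D (h + u) - ψ (h + u)) p volume ≤ ENNReal.ofReal (ε/4) := by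
    have heq : (fun u => D (h + u) - ψ (h + u)) = (D - ψ) ∘ (fun u => h + u) := rfl
    rw [heq, eLpNorm_comp_measurePreserving hDψm mp]
    exact hψclose
  have hC : eLpNorm (fun u => ψ u - D u) p volume ≤ ENNReal.ofReal (ε/4) := by
    have heq : (fun u => ψ u - D u) = -(D - ψ) := by funext u; simp [Pi.sub_apply]
    rw [heq, eLpNorm_neg]
    exact hψclose
  have hB : eLpNorm (fun u => ψ (h + u) - ψ u) p volume ≤ ENNReal.ofReal (ε/4) := by
    have hBzero : ∀ u : ℝ, u ∉ Icc (-(K+1)) (K+1) → ψ (h + u) - ψ u = 0 := by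
      intro u hu
      have hKu : K + 1 < |u| := by
        by_contra hcon
        exact hu (mem_Icc.2 (abs_le.1 (not_lt.1 hcon)))
      have hψu : ψ u = 0 := by
        apply image_eq_zero_of_notMem_tsupport
        intro hmem
        have := hK hmem
        simp only [mem_closedBall, Real.dist_eq, sub_zero] at this
        linarith
      have hψhu : ψ (h + u) = 0 := by
        apply image_eq_zero_of_notMem_tsupport
        intro hmem
        have h2 := hK hmem
        simp only [mem_closedBall, Real.dist_eq, sub_zero] at h2
        have h3 : |u| ≤ |h + u| + |h| := by
          have he : u = (h + u) + (-h) := by ring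
          calc |u| = |(h + u) + (-h)| := by rw [← he]
            _ ≤ |h + u| + |(-h)| := abs_add_le _ _
            _ = |h + u| + |h| := by rw [abs_neg]
        linarith
      rw [hψu, hψhu, sub_zero]
    have hind : (fun u => ψ (h+u) - ψ u)
        = (Icc (-(K+1)) (K+1)).indicator (fun u => ψ (h+u) - ψ u) := by
      funext u; by_cases hu : u ∈ Icc (-(K+1)) (K+1)
      · rw [indicator_of_mem hu]
      · rw [indicator_of_notMem hu, hBzero u hu]
    rw [hind, eLpNorm_indicator_eq_eLpNorm_restrict measurableSet_Icc]
    have hbound : ∀ᵐ u ∂(volume.restrict (Icc (-(K+1)) (K+1))), ‖ψ (h+u) - ψ u‖ ≤ η := by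
      refine Filter.Eventually.of_forall fun u => ?_
      have hd : dist (h+u) u < δ' := by
        simp only [Real.dist_eq, add_sub_cancel_right]; exact hh1
      exact le_of_lt (by simpa [dist_eq_norm] using hψδ hd)
    calc eLpNorm (fun u => ψ (h+u) - ψ u) p (volume.restrict (Icc (-(K+1)) (K+1)))
        ≤ (volume.restrict (Icc (-(K+1)) (K+1)) Set.univ) ^ p.toReal⁻¹ * ENNReal.ofReal η :=
          eLpNorm_le_of_ae_bound hbound
      _ = V * ENNReal.ofReal η := by rw [Measure.restrict_apply_univ]
      _ ≤ ENNReal.ofReal (ε/4) := by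
          rw [← ENNReal.ofReal_toReal hVfin, ← ENNReal.ofReal_mul hVnn]
          refine ENNReal.ofReal_le_ofReal ?_
          have h1 : V.toReal * η = (V.toReal/(V.toReal+1)) * (ε/4) := by
            rw [hηdef]; ring
          rw [h1]
          have h2 : V.toReal/(V.toReal+1) ≤ 1 :=
            (div_le_one (by positivity)).2 (by linarith)
          nlinarith
  have hAm : AEStronglyMeasurable (fun u => D (h+u) - ψ (h+u)) volume :=
    hDψm.comp_quasiMeasurePreserving mp.quasiMeasurePreserving
  have hBm : AEStronglyMeasurable (fun u => ψ (h+u) - ψ u) volume :=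
    ((hψcont.comp (continuous_const.add continuous_id)).sub hψcont).aestronglyMeasurable
  have hCm : AEStronglyMeasurable (fun u => ψ u - D u) volume := hψm.sub hDm
  have hsplit : (fun u => D (h+u) - D u)
      = (fun u => D (h+u) - ψ (h+u)) + ((fun u => ψ (h+u) - ψ u) + fun u => ψ u - D u) := by
    funext u
    simp only [Pi.add_apply]
    abel
  rw [hsplit]
  calc eLpNorm _ p volume
      ≤ eLpNorm (fun u => D (h+u) - ψ (h+u)) p volume
        + eLpNorm ((fun u => ψ (h+u) - ψ u) + fun u => ψ u - D u) p volume :=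
        eLpNorm_add_le hAm (hBm.add hCm) hp1
    _ ≤ eLpNorm (fun u => D (h+u) - ψ (h+u)) p volume
        + (eLpNorm (fun u => ψ (h+u) - ψ u) p volume + eLpNorm (fun u => ψ u - D u) p volume) :=
        add_le_add le_rfl (eLpNorm_add_le hBm hCm hp1)
    _ ≤ ENNReal.ofReal (ε/4) + (ENNReal.ofReal (ε/4) + ENNReal.ofReal (ε/4)) :=
        add_le_add hA (add_le_add hB hC)
    _ < ENNReal.ofReal ε := by
        rw [← ENNReal.ofReal_add (by positivity) (by positivity),
          ← ENNReal.ofReal_add (by positivity) (by positivity)]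
        exact (ENNReal.ofReal_lt_ofReal_iff hε).2 (by linarith)

lemma master (r : ℝ) (hr : 0 < r)
    (f : (ℝ → Vec n) → Vec n) (L : ℝ → ℝ) (hf : GoodRHS r f L)
    (p : ℝ≥0∞)
    (x0 x : ℝ → Vec n) (hx0 : MemW r p x0)
    (b : ℝ≥0∞) (hx : IsSol r f x0 x b)
    (T : ℝ) (hT0 : 0 < T) (hTb : ENNReal.ofReal T < b) :
    ∃ D : ℝ → Vec n, Integrable D volume ∧ MemLp D p volume ∧
      (∀ v ∈ Icc (-r) T, x v = x (-r) + ∫ s in (-r)..v, D s) ∧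
      (∀ᵐ u : ℝ, u ∈ Ioo (-r) T → HasDerivAt x (D u) u) := by
  obtain ⟨d0, hd0int, hd0lp, hd0eq⟩ := hx0
  obtain ⟨hxc, hxeq, hxint⟩ := hx
  obtain ⟨hf0, hfext, hLmono, hLnn, hflip⟩ := hf
  have hrT : -r ≤ T := by linarith
  have hsubS : Icc (-r) T ⊆ {t : ℝ | -r ≤ t ∧ ENNReal.ofReal t < b} := fun u hu =>
    ⟨hu.1, lt_of_le_of_lt (ENNReal.ofReal_le_ofReal hu.2) hTb⟩
  have hcx : ContinuousOn x (Icc (-r) T) := hxc.mono hsubS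
  obtain ⟨M, hM⟩ : ∃ M, ∀ u ∈ Icc (-r) T, ‖x u‖ ≤ M :=
    isCompact_Icc.exists_bound_of_continuousOn hcx
  have hucx := Metric.uniformContinuousOn_iff.1
    (isCompact_Icc.uniformContinuousOn_of_continuous hcx)
  have hmemI : ∀ u ∈ Icc (0:ℝ) T, ∀ s ∈ Icc (-r) (0:ℝ), u + s ∈ Icc (-r) T := by
    intro u hu s hs
    exact ⟨by linarith [hu.1, hs.1], by linarith [hu.2, hs.2]⟩
  have hmemseg : ∀ u ∈ Icc (0:ℝ) T, MemC0 r (seg r x u) := by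
    intro u hu
    exact hcx.comp ((continuous_const.add continuous_id).continuousOn)
      (fun s hs => hmemI u hu s hs)
  have hne0 : ((-r:ℝ)) ∈ Icc (-r) (0:ℝ) := ⟨le_refl _, by linarith⟩
  have hsupseg : ∀ u ∈ Icc (0:ℝ) T, supN r (seg r x u) ≤ M := by
    intro u hu
    refine csSup_le ⟨‖seg r x u (-r)‖, mem_image_of_mem _ hne0⟩ ?_
    rintro w ⟨s, hs, rfl⟩
    exact hM _ (hmemI u hu s hs)
  set φ : ℝ → Vec n := fun u => f (seg r x u) with hφdef
  have hφc : ContinuousOn φ (Icc 0 T) := by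
    rw [Metric.continuousOn_iff]
    intro u hu ε hε
    have hLM : 0 ≤ L M := hLnn M
    set ε₂ := ε / (L M + 1) with hε₂def
    have hε₂ : 0 < ε₂ := by positivity
    obtain ⟨δ, hδ, hδx⟩ := hucx ε₂ hε₂
    refine ⟨δ, hδ, fun a ha hd => ?_⟩
    have hsegd : supN r (seg r x a - seg r x u) ≤ ε₂ := by
      refine csSup_le ⟨‖(seg r x a - seg r x u) (-r)‖, mem_image_of_mem _ hne0⟩ ?_
      rintro w ⟨s, hs, rfl⟩
      simp only [Pi.sub_apply, seg]
      have h1 := hmemI a ha s hs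
      have h2 := hmemI u hu s hs
      have hdist : dist (a + s) (u + s) < δ := by
        simp only [Real.dist_eq, add_sub_add_right_eq_sub]
        simpa [Real.dist_eq] using hd
      have := hδx (a + s) h1 (u + s) h2 hdist
      rw [dist_eq_norm] at this
      exact this.le
    have hfd := hflip M (seg r x a) (seg r x u) (hmemseg a ha) (hmemseg u hu)
      (hsupseg a ha) (hsupseg u hu)
    rw [dist_eq_norm]
    calc ‖φ a - φ u‖ ≤ L M * supN r (seg r x a - seg r x u) := hfd
      _ ≤ L M * ε₂ := mul_le_mul_of_nonneg_left hsegd hLM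
      _ < ε := by
          rw [hε₂def]
          have h2 : L M / (L M + 1) < 1 := (div_lt_one (by positivity)).2 (by linarith)
          calc L M * (ε / (L M + 1)) = (L M / (L M + 1)) * ε := by ring
            _ < 1 * ε := by exact mul_lt_mul_of_pos_right h2 hε
            _ = ε := one_mul ε
  set D : ℝ → Vec n := (Ioo (-r) 0).indicator d0 + (Icc 0 T).indicator φ with hDdef
  have hd0Ioo : IntegrableOn d0 (Ioo (-r) 0) volume := hd0int.mono_set Ioo_subset_Icc_self
  have hDint : Integrable D volume :=
    (hd0Ioo.integrable_indicator measurableSet_Ioo).add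
      ((hφc.integrableOn_Icc).integrable_indicator measurableSet_Icc)
  obtain ⟨C, hC⟩ : ∃ C, ∀ u ∈ Icc (0:ℝ) T, ‖φ u‖ ≤ C :=
    isCompact_Icc.exists_bound_of_continuousOn hφc
  have h1m : AEStronglyMeasurable ((Ioo (-r) 0).indicator d0) volume :=
    (aestronglyMeasurable_indicator_iff measurableSet_Ioo).2 hd0Ioo.aestronglyMeasurable
  have h2m : AEStronglyMeasurable ((Icc 0 T).indicator φ) volume :=
    (aestronglyMeasurable_indicator_iff measurableSet_Icc).2
      (hφc.aestronglyMeasurable measurableSet_Icc)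
  have h1lp : eLpNorm ((Ioo (-r) 0).indicator d0) p volume < ⊤ := by
    rw [eLpNorm_indicator_eq_eLpNorm_restrict measurableSet_Ioo]
    exact hd0lp
  have h2lp : eLpNorm ((Icc 0 T).indicator φ) p volume < ⊤ := by
    rw [eLpNorm_indicator_eq_eLpNorm_restrict measurableSet_Icc]
    refine lt_of_le_of_lt (eLpNorm_le_of_ae_bound (C := max C 0) ?_) ?_
    · filter_upwards [ae_restrict_mem measurableSet_Icc] with u hu
      exact (hC u hu).trans (le_max_left _ _)
    · rw [Measure.restrict_apply_univ]
      exact ENNReal.mul_lt_top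
        (ENNReal.rpow_lt_top_of_nonneg (inv_nonneg.2 ENNReal.toReal_nonneg)
          measure_Icc_lt_top.ne) ENNReal.ofReal_lt_top
  have hDlp : MemLp D p volume := MemLp.add ⟨h1m, h1lp⟩ ⟨h2m, h2lp⟩
  have hDneg : ∀ u ∈ Ioo (-r) (0:ℝ), D u = d0 u := by
    intro u hu
    have hnot : u ∉ Icc (0:ℝ) T := fun h => absurd h.1 (not_le.2 hu.2)
    simp [hDdef, Pi.add_apply, indicator_of_mem hu, indicator_of_notMem hnot]
  have hDpos : ∀ u ∈ Icc (0:ℝ) T, D u = φ u := by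
    intro u hu
    have hnot : u ∉ Ioo (-r) (0:ℝ) := fun h => absurd hu.1 (not_le.2 h.2)
    simp [hDdef, Pi.add_apply, indicator_of_mem hu, indicator_of_notMem hnot]
  have hIIa : ∀ a c : ℝ, IntervalIntegrable D volume a c := fun a c => hDint.intervalIntegrable
  have key0 : ∀ v ∈ Icc (-r) (0:ℝ), x v = x (-r) + ∫ s in (-r)..v, D s := by
    intro v hv
    have h1 : x v = x0 v := hxeq hv
    have h2 : x (-r) = x0 (-r) := hxeq hne0
    have h3 : (∫ s in (-r)..v, D s) = ∫ s in (-r)..v, d0 s := by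
      refine intervalIntegral.integral_congr_ae ?_
      have hvol0 : ∀ᵐ u : ℝ, u ≠ v := by
        rw [ae_iff]
        have : {a : ℝ | ¬a ≠ v} = {v} := by ext u; simp
        rw [this]
        exact measure_singleton v
      filter_upwards [hvol0] with u hune hu
      rw [uIoc_of_le hv.1] at hu
      have humem : u ∈ Ioo (-r) (0:ℝ) :=
        ⟨hu.1, lt_of_lt_of_le (lt_of_le_of_ne hu.2 hune) hv.2⟩
      exact hDneg u humem
    rw [h1, h2, h3, hd0eq v hv]
  have key : ∀ v ∈ Icc (-r) T, x v = x (-r) + ∫ s in (-r)..v, D s := by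
    intro v hv
    rcases le_or_gt v 0 with h | h
    · exact key0 v ⟨hv.1, h⟩
    · have hbv : ENNReal.ofReal v < b := lt_of_le_of_lt (ENNReal.ofReal_le_ofReal hv.2) hTb
      have h1 : x v = x 0 + ∫ s in (0:ℝ)..v, φ s := hxint v h.le hbv
      have h2 : (∫ s in (0:ℝ)..v, φ s) = ∫ s in (0:ℝ)..v, D s := by
        refine intervalIntegral.integral_congr ?_
        intro u hu
        rw [uIcc_of_le h.le] at hu
        exact (hDpos u ⟨hu.1, hu.2.trans hv.2⟩).symm
      have h3 := key0 0 ⟨by linarith, le_refl (0:ℝ)⟩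
      have h4 := intervalIntegral.integral_add_adjacent_intervals
        (hIIa (-r) 0) (hIIa 0 v)
      rw [h1, h2, h3, add_assoc, h4]
  refine ⟨D, hDint, hDlp, key, ?_⟩
  filter_upwards [ae_hasDerivAt_intervalIntegral D hDint (-r)] with u hu hmem
  have hF : HasDerivAt (fun v => x (-r) + ∫ s in (-r)..v, D s) (D u) u :=
    (hu.const_add _)
  refine hF.congr_of_eventuallyEq ?_
  filter_upwards [isOpen_Ioo.mem_nhds hmem] with v hv
  exact key v (Ioo_subset_Icc_self hv)

end Aux

/-- **Lemma 1.** For `p ∈ (1,∞)` and `x0 ∈ W^{1,p}`, along any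
solution on `[0,b)` the segments remain in `W^{1,p}` and the map `t ↦ x_t` is
continuous from `[0,b)` into `W^{1,p}`. -/
theorem stmt9 (n : ℕ) (hn : 1 ≤ n) (r : ℝ) (hr : 0 < r)
    (f : (ℝ → Vec n) → Vec n) (L : ℝ → ℝ) (hf : GoodRHS r f L)
    (p : ℝ≥0∞) (hp : 1 < p) (hp' : p ≠ ⊤)
    (x0 x : ℝ → Vec n) (hx0 : MemW r p x0)
    (b : ℝ≥0∞) (hb : 0 < b) (hx : IsSol r f x0 x b) :
    (∀ t : ℝ, 0 ≤ t → ENNReal.ofReal t < b → MemW r p (seg r x t)) ∧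
    (∀ t : ℝ, 0 ≤ t → ENNReal.ofReal t < b → ∀ ε : ℝ, 0 < ε → ∃ δ : ℝ, 0 < δ ∧
      ∀ t' : ℝ, 0 ≤ t' → ENNReal.ofReal t' < b → |t' - t| < δ →
        sobNorm r p (seg r x t' - seg r x t) < ε) := by
  have getT : ∀ t : ℝ, 0 ≤ t → ENNReal.ofReal t < b →
      ∃ T : ℝ, t < T ∧ 0 < T ∧ ENNReal.ofReal T < b := by
    intro t ht htb
    obtain ⟨c, hc1, hc2⟩ := exists_between htb
    have hcT : c ≠ ⊤ := (lt_of_lt_of_le hc2 le_top).ne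
    have hcpos : 0 < c := lt_of_le_of_lt (by simp) hc1
    refine ⟨c.toReal, ?_, ENNReal.toReal_pos hcpos.ne' hcT, ?_⟩
    · have h := hc1
      rw [← ENNReal.ofReal_toReal hcT] at h
      exact (ENNReal.ofReal_lt_ofReal_iff_of_nonneg ht).1 h
    · rw [ENNReal.ofReal_toReal hcT]; exact hc2
  constructor
  · intro t ht htb
    obtain ⟨T, hTt, hT0, hTb⟩ := getT t ht htb
    obtain ⟨D, hDint, hDlp, key, _⟩ := master r hr f L hf p x0 x hx0 b hx T hT0 hTb
    have hmp : MeasurePreserving (fun s : ℝ => t + s) volume volume :=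
      measurePreserving_add_left volume t
    refine ⟨fun s => D (t + s), ?_, ?_, ?_⟩
    · exact ((hmp.integrable_comp hDlp.aestronglyMeasurable).2 hDint).integrableOn
    · calc eLpNorm (fun s => D (t + s)) p (volume.restrict (Ioo (-r) 0))
          ≤ eLpNorm (fun s => D (t + s)) p volume :=
            eLpNorm_mono_measure _ Measure.restrict_le_self
        _ = eLpNorm D p volume :=
            eLpNorm_comp_measurePreserving hDlp.aestronglyMeasurable hmp
        _ < ⊤ := hDlp.2
    · intro s hs
      have hm1 : t + s ∈ Icc (-r) T := ⟨by linarith [hs.1], by linarith [hs.2]⟩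
      have hm2 : t + (-r) ∈ Icc (-r) T := ⟨by linarith, by linarith⟩
      have h1 := key _ hm1
      have h2 := key _ hm2
      have h3 : (∫ u in (-r)..s, D (t + u)) = ∫ u in (t + (-r))..(t + s), D u :=
        intervalIntegral.integral_comp_add_left (f := D) t
      have h4 := intervalIntegral.integral_add_adjacent_intervals
        (hDint.intervalIntegrable (a := -r) (b := t + (-r)))
        (hDint.intervalIntegrable (a := t + (-r)) (b := t + s))
      show x (t + s) = x (t + (-r)) + ∫ u in (-r)..s, D (t + u)
      rw [h3, h1, h2, add_assoc, h4]
  · intro t ht htb ε hε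
    obtain ⟨T, hTt, hT0, hTb⟩ := getT t ht htb
    obtain ⟨D, hDint, hDlp, key, hadAE⟩ := master r hr f L hf p x0 x hx0 b hx T hT0 hTb
    have hsubS : Icc (-r) T ⊆ {u : ℝ | -r ≤ u ∧ ENNReal.ofReal u < b} := fun u hu =>
      ⟨hu.1, lt_of_le_of_lt (ENNReal.ofReal_le_ofReal hu.2) hTb⟩
    have hcx : ContinuousOn x (Icc (-r) T) := hx.1.mono hsubS
    have hucx := Metric.uniformContinuousOn_iff.1
      (isCompact_Icc.uniformContinuousOn_of_continuous hcx)
    obtain ⟨δ₁, hδ₁, hux⟩ := hucx (ε/4) (by positivity)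
    obtain ⟨δ₂, hδ₂, htr⟩ := translate_Lp_cont D hp.le hp' hDlp (ε := ε/4) (by positivity)
    refine ⟨min (T - t) (min δ₁ δ₂), lt_min (by linarith) (lt_min hδ₁ hδ₂),
      fun t' ht' _ hd => ?_⟩
    have hdT : |t' - t| < T - t := lt_of_lt_of_le hd (min_le_left _ _)
    have hd1 : |t' - t| < δ₁ := lt_of_lt_of_le hd ((min_le_right _ _).trans (min_le_left _ _))
    have hd2 : |t' - t| < δ₂ := lt_of_lt_of_le hd ((min_le_right _ _).trans (min_le_right _ _))
    have ht'T : t' < T := by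
      have := (abs_lt.1 hdT).2; linarith
    have hne0 : ((-r:ℝ)) ∈ Icc (-r) (0:ℝ) := ⟨le_refl _, by linarith⟩
    have hsup : supN r (seg r x t' - seg r x t) ≤ ε/4 := by
      refine csSup_le ⟨‖(seg r x t' - seg r x t) (-r)‖, mem_image_of_mem _ hne0⟩ ?_
      rintro w ⟨s, hs, rfl⟩
      simp only [Pi.sub_apply, seg]
      have h1 : t' + s ∈ Icc (-r) T := ⟨by linarith [hs.1], by linarith [hs.2]⟩
      have h2 : t + s ∈ Icc (-r) T := ⟨by linarith [hs.1], by linarith [hs.2]⟩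
      have hdist : dist (t' + s) (t + s) < δ₁ := by
        simp only [Real.dist_eq, add_sub_add_right_eq_sub]
        exact hd1
      have hb2 := hux (t' + s) h1 (t + s) h2 hdist
      rw [dist_eq_norm] at hb2
      exact hb2.le
    have hpull : ∀ a : ℝ, ∀ᵐ s : ℝ, (a + s ∈ Ioo (-r) T → HasDerivAt x (D (a + s)) (a + s)) :=
      fun a => (measurePreserving_add_left volume a).quasiMeasurePreserving.ae hadAE
    have hder : ∀ᵐ s ∂(volume.restrict (Ioo (-r) (0:ℝ))),
        deriv (seg r x t' - seg r x t) s = D (t' + s) - D (t + s) := by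
      filter_upwards [ae_restrict_of_ae (hpull t), ae_restrict_of_ae (hpull t'),
        ae_restrict_mem measurableSet_Ioo] with s hs1 hs2 hsm
      have hm1 : t + s ∈ Ioo (-r) T := ⟨by linarith [hsm.1], by linarith [hsm.2]⟩
      have hm2 : t' + s ∈ Ioo (-r) T := ⟨by linarith [hsm.1], by linarith [hsm.2]⟩
      have hx1 : HasDerivAt (fun s : ℝ => x (t + s)) (D (t + s)) s := by
        have h := (hs1 hm1).scomp s ((hasDerivAt_id s).const_add t)
        rw [one_smul] at h; exact h
      have hx2 : HasDerivAt (fun s : ℝ => x (t' + s)) (D (t' + s)) s := by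
        have h := (hs2 hm2).scomp s ((hasDerivAt_id s).const_add t')
        rw [one_smul] at h; exact h
      have hsub : HasDerivAt (seg r x t' - seg r x t) (D (t' + s) - D (t + s)) s :=
        hx2.sub hx1
      exact hsub.deriv
    have hmp : MeasurePreserving (fun s : ℝ => t + s) volume volume :=
      measurePreserving_add_left volume t
    have hshift : AEStronglyMeasurable (fun u : ℝ => D ((t' - t) + u) - D u) volume :=
      (hDlp.aestronglyMeasurable.comp_quasiMeasurePreserving
        (measurePreserving_add_left volume (t' - t)).quasiMeasurePreserving).sub
        hDlp.aestronglyMeasurable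
    have heq2 : eLpNorm (fun s : ℝ => D (t' + s) - D (t + s)) p volume
        = eLpNorm (fun u : ℝ => D ((t' - t) + u) - D u) p volume := by
      have h1 : (fun s : ℝ => D (t' + s) - D (t + s))
          = (fun u : ℝ => D ((t' - t) + u) - D u) ∘ (fun s : ℝ => t + s) := by
        funext s
        simp only [Function.comp_apply]
        rw [show t' - t + (t + s) = t' + s by ring]
      rw [h1, eLpNorm_comp_measurePreserving hshift hmp]
    have help : eLpNorm (deriv (seg r x t' - seg r x t)) p (volume.restrict (Ioo (-r) 0))
        < ENNReal.ofReal (ε/4) := by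
      rw [eLpNorm_congr_ae hder]
      calc eLpNorm (fun s : ℝ => D (t' + s) - D (t + s)) p (volume.restrict (Ioo (-r) 0))
          ≤ eLpNorm (fun s : ℝ => D (t' + s) - D (t + s)) p volume :=
            eLpNorm_mono_measure _ Measure.restrict_le_self
        _ = eLpNorm (fun u : ℝ => D ((t' - t) + u) - D u) p volume := heq2
        _ < ENNReal.ofReal (ε/4) := htr (t' - t) hd2
    have hfin : (eLpNorm (deriv (seg r x t' - seg r x t)) p
        (volume.restrict (Ioo (-r) 0))).toReal < ε/4 :=
      ENNReal.toReal_lt_of_lt_ofReal help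
    have hsn : sobNorm r p (seg r x t' - seg r x t)
        = supN r (seg r x t' - seg r x t)
          + (eLpNorm (deriv (seg r x t' - seg r x t)) p
              (volume.restrict (Ioo (-r) 0))).toReal := rfl
    rw [hsn]
    linarith
end
end
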